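/- Every nonzero λ ∈ Λ_{q^{−Nd−l}}(f) has a unique expansion λ = Σ_{i=0}^{m} c_i(T)·Q̄_{N+i} with c_i(T) ∈ F_q[T], deg c_i ≤ d−1 for all i, deg c_0 ≤ d−1−l, and c_m ≠ 0. -/

import Mathlib

open Polynomial

/-- `‖x‖`: distance from `x ∈ K` to the nearest element of `A = F_q[T]`. -/
noncomputable def pnorm {Fq K : Type*} [Field Fq] [Field K]
    (ι : Polynomial Fq →+* K) (v : AbsoluteValue K ℝ) (x : K) : ℝ :=
  sInf (Set.range fun p : Polynomial Fq => v (x - ι p))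

/-- `Λ_ε(f) = { λ ∈ A : ‖λf‖ < ε }`. -/
def Lambda {Fq K : Type*} [Field Fq] [Field K]
    (ι : Polynomial Fq →+* K) (v : AbsoluteValue K ℝ) (f : K) (ε : ℝ) :
    Set (Polynomial Fq) :=
  {p | pnorm ι v (ι p * f) < ε}


lemma ultra_eq' {K : Type*} [Field K] (v : AbsoluteValue K ℝ)
    (hna : ∀ x y : K, v (x + y) ≤ max (v x) (v y))
    {x y : K} (h : v y < v x) : v (x + y) = v x := by
  refine le_antisymm ((hna x y).trans (max_le le_rfl h.le)) ?_
  by_contra hlt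
  push_neg at hlt
  have h2 : x = (x + y) + (-y) := by ring
  have h3 := hna (x + y) (-y)
  rw [← h2, v.map_neg] at h3
  rcases max_cases (v (x+y)) (v y) with ⟨he, _⟩ | ⟨he, _⟩ <;> rw [he] at h3
  · exact absurd h3 (not_le.mpr hlt)
  · exact absurd h3 (not_le.mpr h)

lemma ultra_sum_lt' {K : Type*} [Field K] (v : AbsoluteValue K ℝ)
    (hna : ∀ x y : K, v (x + y) ≤ max (v x) (v y))
    {α : Type*} {s : Finset α} {g : α → K} {B : ℝ} (hB : 0 < B)
    (h : ∀ a ∈ s, v (g a) < B) : v (∑ a ∈ s, g a) < B := by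
  classical
  induction s using Finset.induction_on with
  | empty => simpa using hB
  | @insert x s hx ih =>
    rw [Finset.sum_insert hx]
    refine lt_of_le_of_lt (hna _ _) (max_lt (h x (Finset.mem_insert_self x s)) ?_)
    exact ih fun a ha => h a (Finset.mem_insert_of_mem ha)

lemma pnorm_eq' {Fq K : Type*} [Field Fq] [Fintype Fq] [Field K]
    (ι : Polynomial Fq →+* K) (v : AbsoluteValue K ℝ)
    (hna : ∀ x y : K, v (x + y) ≤ max (v x) (v y))
    (hdeg : ∀ g : Polynomial Fq, g ≠ 0 → v (ι g) = (Fintype.card Fq : ℝ) ^ g.natDegree)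
    (P : Polynomial Fq) (r : K) (hr : v r < 1) :
    pnorm ι v (ι P - r) = v r := by
  have hq : (1:ℝ) ≤ (Fintype.card Fq : ℝ) := by
    exact_mod_cast Nat.one_le_iff_ne_zero.mpr Fintype.card_ne_zero
  refine le_antisymm ?_ ?_
  · have : v (ι P - r - ι P) = v r := by rw [sub_sub_cancel_left, v.map_neg]
    exact csInf_le ⟨0, by rintro x ⟨p, rfl⟩; positivity⟩ ⟨P, this⟩
  · refine le_csInf ⟨v (ι P - r - ι P), P, rfl⟩ ?_
    rintro x ⟨p, rfl⟩
    show v r ≤ v (ι P - r - ι p)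
    rcases eq_or_ne p P with rfl | hne
    · rw [sub_sub_cancel_left, v.map_neg]
    · have h1 : ι P - r - ι p = ι (P - p) + (-r) := by rw [map_sub]; ring
      have h2 : (1:ℝ) ≤ v (ι (P - p)) := by
        rw [hdeg _ (sub_ne_zero.mpr (Ne.symm hne))]
        exact one_le_pow₀ hq
      have h3 : v (-r) < v (ι (P - p)) := lt_of_lt_of_le (by rwa [v.map_neg]) h2
      rw [h1, ultra_eq' v hna h3]
      exact hr.le.trans h2

lemma min_extract {K : Type*} [Field K] (v : AbsoluteValue K ℝ)
    (hna : ∀ x y : K, v (x + y) ≤ max (v x) (v y)) :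
    ∀ (s : Finset ℕ) (t : ℕ → K) (ε : ℝ),
      (∀ n ∈ s, ∀ k ∈ s, n < k → t n ≠ 0 → v (t k) < v (t n)) →
      v (∑ n ∈ s, t n) < ε → ∀ n ∈ s, v (t n) < ε := by
  intro s
  induction s using Finset.strongInduction with
  | _ s ih =>
    intro t ε hcmp hsum n hn
    have hne : s.Nonempty := ⟨n, hn⟩
    set n₀ := s.min' hne with hn₀def
    have hn₀ : n₀ ∈ s := s.min'_mem hne
    have hεpos : 0 < ε := lt_of_le_of_lt (v.nonneg _) hsum
    have hcmp' : ∀ a ∈ s.erase n₀, ∀ b ∈ s.erase n₀, a < b → t a ≠ 0 → v (t b) < v (t a) :=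
      fun a ha b hb hab => hcmp a (Finset.mem_of_mem_erase ha) b (Finset.mem_of_mem_erase hb) hab
    by_cases h0 : t n₀ = 0
    · have hsum' : ∑ k ∈ s.erase n₀, t k = ∑ k ∈ s, t k := by
        rw [← Finset.add_sum_erase s t hn₀, h0, zero_add]
      rcases eq_or_ne n n₀ with rfl | hne'
      · rw [h0]; simpa using hεpos
      · exact ih (s.erase n₀) (Finset.erase_ssubset hn₀) t ε hcmp'
          (by rw [hsum']; exact hsum) n (Finset.mem_erase.mpr ⟨hne', hn⟩)
    · have hvpos : 0 < v (t n₀) := v.pos h0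
      have hrest : v (∑ k ∈ s.erase n₀, t k) < v (t n₀) :=
        ultra_sum_lt' v hna hvpos (fun k hk => hcmp n₀ hn₀ k (Finset.mem_of_mem_erase hk)
          (lt_of_le_of_ne (s.min'_le k (Finset.mem_of_mem_erase hk))
            (Ne.symm (Finset.ne_of_mem_erase hk))) h0)
      have hveq : v (∑ k ∈ s, t k) = v (t n₀) := by
        rw [← Finset.add_sum_erase s t hn₀]
        exact ultra_eq' v hna hrest
      have htop : v (t n₀) < ε := hveq ▸ hsum
      rcases eq_or_ne n n₀ with rfl | hne'
      · exact htop
      · exact ih (s.erase n₀) (Finset.erase_ssubset hn₀) t ε hcmp'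
          (hrest.trans htop) n (Finset.mem_erase.mpr ⟨hne', hn⟩)

lemma Qbar_monic_deg {Fq : Type*} [Field Fq]
    (a : Polynomial Fq) (d : ℕ) (hda : a.natDegree = d) (hd : 0 < d)
    (b c : Fq) (hc : c ≠ 0) (hca : (C c * a).Monic)
    (Q : ℕ → Polynomial Fq) (hQ0 : Q 0 = 1) (hQ1 : Q 1 = a)
    (hQrec : ∀ n, Q (n + 2) = a * Q (n + 1) + C b * Q n)
    (Qbar : ℕ → Polynomial Fq) (hQbar : ∀ n, Qbar n = C (c ^ n) * Q n) :
    ∀ n, (Qbar n).Monic ∧ (Qbar n).natDegree = n * d := by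
  have h0 : Qbar 0 = 1 := by rw [hQbar, hQ0, pow_zero, map_one, one_mul]
  have h1 : Qbar 1 = C c * a := by rw [hQbar, hQ1, pow_one]
  have hdca : (C c * a).natDegree = d := by
    rw [natDegree_C_mul hc, hda]
  have hrec : ∀ n, Qbar (n+2) = (C c * a) * Qbar (n+1) + C (c^2 * b) * Qbar n := by
    intro n
    rw [hQbar, hQbar, hQbar, hQrec]
    simp only [map_mul, map_pow]
    ring
  have key : ∀ n, ((Qbar n).Monic ∧ (Qbar n).natDegree = n * d) ∧
      ((Qbar (n+1)).Monic ∧ (Qbar (n+1)).natDegree = (n+1) * d) := by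
    intro n
    induction n with
    | zero =>
      refine ⟨⟨by rw [h0]; exact monic_one, by simp [h0]⟩, ?_, ?_⟩
      · rw [h1]; exact hca
      · rw [h1, hdca]; omega
    | succ n ih =>
      refine ⟨ih.2, ?_, ?_⟩
      · rw [hrec]
        refine Monic.add_of_left (hca.mul ih.2.1) ?_
        have hm : ((C c * a) * Qbar (n+1)).degree = (((n+2) * d : ℕ) : WithBot ℕ) := by
          rw [degree_eq_natDegree (hca.mul ih.2.1).ne_zero,
            natDegree_mul hca.ne_zero ih.2.1.ne_zero, hdca, ih.2.2]
          congr 1; ring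
        rw [hm]
        calc (C (c^2*b) * Qbar n).degree ≤ (Qbar n).degree := by
              rcases eq_or_ne (c^2*b) 0 with h | h
              · simp [h]
              · rw [degree_C_mul h]
            _ = ((n * d : ℕ) : WithBot ℕ) := by
              rw [degree_eq_natDegree ih.1.1.ne_zero, ih.1.2]
            _ < (((n+2) * d : ℕ) : WithBot ℕ) := by
              exact_mod_cast by nlinarith [hd]
      · rw [hrec]
        have hdeg1 : ((C c * a) * Qbar (n+1)).natDegree = (n+2) * d := by
          rw [natDegree_mul hca.ne_zero ih.2.1.ne_zero, hdca, ih.2.2]; ring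
        have hlt : (C (c^2*b) * Qbar n).degree < ((C c * a) * Qbar (n+1)).degree := by
          rw [degree_eq_natDegree (hca.mul ih.2.1).ne_zero,
            natDegree_mul hca.ne_zero ih.2.1.ne_zero, hdca, ih.2.2]
          calc (C (c^2*b) * Qbar n).degree ≤ (Qbar n).degree := by
                rcases eq_or_ne (c^2*b) 0 with h | h
                · simp [h]
                · rw [degree_C_mul h]
              _ = ((n * d : ℕ) : WithBot ℕ) := by
                rw [degree_eq_natDegree ih.1.1.ne_zero, ih.1.2]
              _ < ((d + (n+1) * d : ℕ) : WithBot ℕ) := by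
                exact_mod_cast by nlinarith [hd]
        rw [natDegree_add_eq_left_of_degree_lt hlt, hdeg1]
  intro n; exact (key n).1

lemma key_id {Fq K : Type*} [Field Fq] [Field K]
    (ι : Polynomial Fq →+* K)
    (a : Polynomial Fq) (b : Fq)
    (f : K) (hroot : f ^ 2 = ι a * f + ι (C b))
    (Q : ℕ → Polynomial Fq) (hQ0 : Q 0 = 1) (hQ1 : Q 1 = a)
    (hQrec : ∀ n, Q (n + 2) = a * Q (n + 1) + C b * Q n) :
    ∀ n, ι (Q n) * f = ι (Q (n+1)) - (ι a - f)^(n+1) := by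
  have key : ∀ n, (ι (Q n) * f = ι (Q (n+1)) - (ι a - f)^(n+1)) ∧
      (ι (Q (n+1)) * f = ι (Q (n+2)) - (ι a - f)^(n+2)) := by
    intro n
    induction n with
    | zero =>
      have q2 : Q 2 = a * Q 1 + C b * Q 0 := hQrec 0
      rw [hQ0, hQ1, mul_one] at q2
      constructor
      · show ι (Q 0) * f = ι (Q 1) - (ι a - f)^1
        rw [hQ0, hQ1]; simp only [map_one]; ring
      · show ι (Q 1) * f = ι (Q 2) - (ι a - f)^2
        rw [hQ1, q2]
        simp only [map_add, map_mul]
        linear_combination hroot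
    | succ n ih =>
      refine ⟨ih.2, ?_⟩
      show ι (Q (n+2)) * f = ι (Q (n+3)) - (ι a - f)^(n+3)
      have mr1 : ι (Q (n+2)) = ι a * ι (Q (n+1)) + ι (C b) * ι (Q n) := by
        rw [hQrec n]; simp [map_add, map_mul]
      have mr2 : ι (Q (n+3)) = ι a * ι (Q (n+2)) + ι (C b) * ι (Q (n+1)) := by
        have : Q (n+3) = a * Q (n+2) + C b * Q (n+1) := hQrec (n+1)
        rw [this]; simp [map_add, map_mul]
      linear_combination f * mr1 + (ι a) * ih.2 + (ι (C b)) * ih.1 - mr2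
        + (ι a - f)^(n+1) * hroot
  exact fun n => (key n).1

lemma sum_degree_lt {Fq : Type*} [Field Fq] (d : ℕ)
    (Qbar : ℕ → Polynomial Fq)
    (hQm : ∀ n, (Qbar n).Monic ∧ (Qbar n).natDegree = n * d)
    (M : ℕ) (cc : ℕ → Polynomial Fq) (hcd : ∀ n, (cc n).degree < (d : ℕ)) :
    (∑ n ∈ Finset.range (M+1), cc n * Qbar n).degree < (((M+1)*d : ℕ) : WithBot ℕ) := by
  refine lt_of_le_of_lt (degree_sum_le _ _) ?_
  rw [Finset.sup_lt_iff (by exact_mod_cast WithBot.bot_lt_coe _)]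
  intro n hn
  rcases eq_or_ne (cc n) 0 with h | h
  · simp [h]
    exact WithBot.bot_lt_coe _
  · have h1 : (cc n * Qbar n).degree = ((cc n).natDegree + n * d : ℕ) := by
      rw [degree_mul, degree_eq_natDegree h, degree_eq_natDegree (hQm n).1.ne_zero, (hQm n).2]
      exact_mod_cast rfl
    rw [h1, Nat.cast_lt]
    have h2 : (cc n).natDegree < d := by
      have := hcd n
      rwa [degree_eq_natDegree h, Nat.cast_lt] at this
    have h3 : n ≤ M := Nat.lt_succ_iff.mp (Finset.mem_range.mp hn)
    nlinarith [h2, h3]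

lemma expansion_zero {Fq : Type*} [Field Fq] (d : ℕ) (hd : 0 < d)
    (Qbar : ℕ → Polynomial Fq)
    (hQm : ∀ n, (Qbar n).Monic ∧ (Qbar n).natDegree = n * d) :
    ∀ M (cc : ℕ → Polynomial Fq), (∀ n, (cc n).degree < (d:ℕ)) →
      ∑ n ∈ Finset.range (M+1), cc n * Qbar n = 0 → ∀ n ≤ M, cc n = 0 := by
  intro M
  induction M with
  | zero =>
    intro cc hcd hsum n hn
    interval_cases n
    simpa [(hQm 0).1.ne_zero] using hsum
  | succ M ihM =>
    intro cc hcd hsum n hn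
    rw [Finset.sum_range_succ] at hsum
    have htop : cc (M+1) = 0 := by
      by_contra h
      have h1 : (cc (M+1) * Qbar (M+1)).degree = ((cc (M+1)).natDegree + (M+1) * d : ℕ) := by
        rw [degree_mul, degree_eq_natDegree h, degree_eq_natDegree (hQm (M+1)).1.ne_zero,
          (hQm (M+1)).2]
        exact_mod_cast rfl
      have h2 : (∑ n ∈ Finset.range (M+1), cc n * Qbar n).degree
          < (cc (M+1) * Qbar (M+1)).degree := by
        refine lt_of_lt_of_le (sum_degree_lt d Qbar hQm M cc hcd) ?_
        rw [h1, Nat.cast_le]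
        omega
      have h3 := degree_add_eq_right_of_degree_lt h2
      rw [hsum, degree_zero, h1] at h3
      exact (WithBot.bot_ne_coe h3).elim
    rcases Nat.lt_succ_iff_lt_or_eq.mp (Nat.lt_succ_of_le hn) with h | h
    · refine ihM cc hcd ?_ n (by omega)
      rw [htop, zero_mul, add_zero] at hsum
      exact hsum
    · rw [h]; exact htop

lemma expansion_exists {Fq : Type*} [Field Fq] (d : ℕ) (hd : 0 < d)
    (Qbar : ℕ → Polynomial Fq)
    (hQm : ∀ n, (Qbar n).Monic ∧ (Qbar n).natDegree = n * d) :
    ∀ M (lam : Polynomial Fq), lam.degree < (((M+1) * d : ℕ) : WithBot ℕ) →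
      ∃ cc : ℕ → Polynomial Fq, (∀ n, (cc n).degree < (d : ℕ)) ∧
        (∀ n, M < n → cc n = 0) ∧ lam = ∑ n ∈ Finset.range (M+1), cc n * Qbar n := by
  intro M
  induction M with
  | zero =>
    intro lam h
    have hQ1 : Qbar 0 = 1 := by
      have := (hQm 0).1
      exact this.natDegree_eq_zero.mp (by simpa using (hQm 0).2) |>.symm ▸ rfl
    refine ⟨fun n => if n = 0 then lam else 0, ?_, ?_, ?_⟩
    · intro n
      rcases eq_or_ne n 0 with rfl | hn
      · simpa using by simpa using h
      · simp [hn]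
    · intro n hn
      have hne : n ≠ 0 := by omega
      simp [hne]
    · simp [hQ1]
  | succ M ihM =>
    intro lam h
    set qq := lam /ₘ Qbar (M+1) with hqq
    set rem := lam %ₘ Qbar (M+1) with hrem
    have hmon := (hQm (M+1)).1
    have hdegQ : (Qbar (M+1)).degree = (((M+1)*d : ℕ) : WithBot ℕ) := by
      rw [degree_eq_natDegree hmon.ne_zero, (hQm (M+1)).2]
    have hremlt : rem.degree < (((M+1)*d : ℕ) : WithBot ℕ) := by
      rw [← hdegQ]; exact degree_modByMonic_lt lam hmon
    have hqqlt : qq.degree < (d : ℕ) := by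
      rcases eq_or_ne qq 0 with h0 | h0
      · rw [h0, degree_zero]; exact WithBot.bot_lt_coe _
      · have hlam0 : lam ≠ 0 := by
          intro hl; rw [hl] at hqq; simp [zero_divByMonic] at hqq; exact h0 hqq
        have hnd : lam.natDegree < (M+2) * d := by
          have h5 := (natDegree_lt_iff_degree_lt hlam0).mpr h
          have he : (M+1+1)*d = (M+2)*d := by ring
          omega
        rw [degree_eq_natDegree h0, Nat.cast_lt, hqq, natDegree_divByMonic lam hmon,
          (hQm (M+1)).2]
        have he : (M+2)*d = (M+1)*d + d := by ring
        omega
    obtain ⟨cc', hcd', hcz', hsum'⟩ := ihM rem hremlt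
    refine ⟨fun n => if n = M+1 then qq else cc' n, ?_, ?_, ?_⟩
    · intro n
      rcases eq_or_ne n (M+1) with rfl | hn
      · simpa using hqqlt
      · simpa [hn] using hcd' n
    · intro n hn
      have : n ≠ M + 1 := by omega
      simp [this]
      exact hcz' n (by omega)
    · rw [Finset.sum_range_succ]
      have h1 : ∑ n ∈ Finset.range (M+1), (if n = M+1 then qq else cc' n) * Qbar n
          = ∑ n ∈ Finset.range (M+1), cc' n * Qbar n := by
        refine Finset.sum_congr rfl fun n hn => ?_
        have : n ≠ M+1 := by have := Finset.mem_range.mp hn; omega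
        simp [this]
      have h2 : (fun n => if n = M + 1 then qq else cc' n) (M + 1) * Qbar (M+1)
          = qq * Qbar (M+1) := by simp
      rw [h1, h2, ← hsum', hrem, hqq, mul_comm]
      exact (modByMonic_add_div lam (Qbar (M+1))).symm

lemma ext_sum {Fq : Type*} [Field Fq] (Qbar : ℕ → Polynomial Fq) (N m M : ℕ) (hM : N + m ≤ M)
    (u : Fin (m+1) → Polynomial Fq) :
    ∑ n ∈ Finset.range (M+1),
        (if h : N ≤ n ∧ n ≤ N + m then u ⟨n - N, by omega⟩ else 0) * Qbar n
      = ∑ i : Fin (m+1), u i * Qbar (N + (i : ℕ)) := by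
  have h1 : ∑ n ∈ Finset.range (M+1),
        (if h : N ≤ n ∧ n ≤ N + m then u ⟨n - N, by omega⟩ else 0) * Qbar n
      = ∑ n ∈ Finset.Ico N (N+m+1),
        (if h : N ≤ n ∧ n ≤ N + m then u ⟨n - N, by omega⟩ else 0) * Qbar n := by
    refine (Finset.sum_subset ?_ ?_).symm
    · intro n hn
      rw [Finset.mem_Ico] at hn
      rw [Finset.mem_range]
      omega
    · intro n hn hn2
      rw [Finset.mem_range] at hn
      rw [Finset.mem_Ico] at hn2
      have : ¬ (N ≤ n ∧ n ≤ N + m) := by omega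
      rw [dif_neg this, zero_mul]
  rw [h1, Finset.sum_Ico_eq_sum_range]
  have h2 : N + m + 1 - N = m + 1 := by omega
  rw [h2]
  have h3 : ∑ i : Fin (m+1), u i * Qbar (N + (i : ℕ))
      = ∑ k ∈ Finset.range (m+1),
          (if h : k ≤ m then u ⟨k, by omega⟩ else 0) * Qbar (N + k) := by
    rw [Finset.sum_range]
    refine Finset.sum_congr rfl fun i _ => ?_
    have hi : (i : ℕ) ≤ m := by omega
    rw [dif_pos hi]
  rw [h3]
  refine Finset.sum_congr rfl fun n hn => ?_
  rw [Finset.mem_range] at hn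
  have hc1 : N ≤ N + n ∧ N + n ≤ N + m := by omega
  have hc2 : n ≤ m := by omega
  rw [dif_pos hc1, dif_pos hc2]
  congr 2
  exact Fin.ext (by simp)

/-- Every nonzero `λ ∈ Λ_{q^{-Nd-l}}(f)` has a unique expansion
`λ = Σ_{i=0}^m c_i(T) Q̄_{N+i}` with `deg c_i ≤ d-1` for all `i`, `deg c_0 ≤ d-1-l`
(i.e. `deg c_i < d` and `deg c_0 < d-l`), and `c_m ≠ 0`. -/
theorem stmt_8 {Fq K : Type*} [Field Fq] [Fintype Fq] [Field K]
    (ι : Polynomial Fq →+* K) (v : AbsoluteValue K ℝ)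
    (hna : ∀ x y : K, v (x + y) ≤ max (v x) (v y))
    (hdeg : ∀ g : Polynomial Fq, g ≠ 0 → v (ι g) = (Fintype.card Fq : ℝ) ^ g.natDegree)
    (a : Polynomial Fq) (d : ℕ) (hda : a.natDegree = d) (hd : 0 < d)
    (b : Fq) (hb : b ≠ 0)
    (f : K) (hroot : f ^ 2 = ι a * f + ι (C b)) (hf : 1 < v f)
    (Q : ℕ → Polynomial Fq) (hQ0 : Q 0 = 1) (hQ1 : Q 1 = a)
    (hQrec : ∀ n, Q (n + 2) = a * Q (n + 1) + C b * Q n)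
    (c : Fq) (hc : c ≠ 0) (hca : (C c * a).Monic)
    (Qbar : ℕ → Polynomial Fq) (hQbar : ∀ n, Qbar n = C (c ^ n) * Q n)
    (l : ℕ) (hl : l ≤ d - 1) (N : ℕ)
    (lam : Polynomial Fq) (hlam0 : lam ≠ 0)
    (hlam : lam ∈ Lambda ι v f (((Fintype.card Fq : ℝ) ^ (N * d + l))⁻¹)) :
    ∃! p : Σ m : ℕ, Fin (m + 1) → Polynomial Fq,
      (∀ i, (p.2 i).degree < (d : ℕ)) ∧
      (p.2 0).degree < ((d - l : ℕ) : WithBot ℕ) ∧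
      p.2 (Fin.last p.1) ≠ 0 ∧
      lam = ∑ i : Fin (p.1 + 1), p.2 i * Qbar (N + (i : ℕ)) := by
  classical
  set q : ℝ := (Fintype.card Fq : ℝ) with hqdef
  have hq1 : (1:ℝ) < q := by rw [hqdef]; exact_mod_cast Fintype.one_lt_card
  have hq0 : (0:ℝ) < q := lt_trans one_pos hq1
  have ha0 : a ≠ 0 := fun h => by rw [h, natDegree_zero] at hda; omega
  have hQm := Qbar_monic_deg a d hda hd b c hc hca Q hQ0 hQ1 hQrec Qbar hQbar
  have hKey := key_id ι a b f hroot Q hQ0 hQ1 hQrec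
  set g : K := ι a - f with hgdef
  have hCb0 : C b ≠ 0 := fun h => hb (by simpa using h)
  have hvcb : v (ι (C b)) = 1 := by
    rw [hdeg _ hCb0, natDegree_C, pow_zero]
  have hva : v (ι a) = q ^ d := by rw [hdeg a ha0, hda]
  have hqd1 : (1:ℝ) < q ^ d := one_lt_pow₀ hq1 (by omega)
  have hvf : v f = q ^ d := by
    have h1 : v (ι (C b)) < v (ι a * f) := by
      rw [hvcb, v.map_mul, hva]
      nlinarith [hf]
    have h2 : v (f^2) = v (ι a * f) := by rw [hroot]; exact ultra_eq' v hna h1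
    rw [v.map_pow, v.map_mul, hva] at h2
    have hvf0 : v f ≠ 0 := ne_of_gt (lt_trans one_pos hf)
    have h3 : v f * v f = q ^ d * v f := by nlinarith [h2]
    exact mul_right_cancel₀ hvf0 h3
  have hvg : v g = (q ^ d)⁻¹ := by
    have hfg : f * g = -(ι (C b)) := by rw [hgdef]; linear_combination -hroot
    have h1 : v f * v g = 1 := by rw [← v.map_mul, hfg, v.map_neg, hvcb]
    rw [hvf] at h1
    field_simp at h1 ⊢
    linarith [h1]

  -- generic expansion of lam
  set M : ℕ := lam.natDegree / d with hMdef
  have hMlt : lam.natDegree < (M+1) * d := by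
    have e1 := Nat.div_add_mod lam.natDegree d
    have e2 : lam.natDegree % d < d := Nat.mod_lt _ hd
    have e3 : (M+1)*d = d * M + d := by ring
    rw [e3]
    rw [hMdef]
    omega
  obtain ⟨cc, hcd, hcz, hsum⟩ := expansion_exists d hd Qbar hQm M lam
    (by exact_mod_cast (natDegree_lt_iff_degree_lt hlam0).mp hMlt)
  have hcnd : ∀ n, cc n ≠ 0 → (cc n).natDegree < d := by
    intro n h
    have := hcd n
    rwa [degree_eq_natDegree h, Nat.cast_lt] at this
  -- λ f = ι P - r
  set t : ℕ → K := fun n => ι (cc n * C (c^n)) * g^(n+1) with htdef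
  set P : Polynomial Fq := ∑ n ∈ Finset.range (M+1), cc n * C (c^n) * Q (n+1) with hPdef
  set r : K := ∑ n ∈ Finset.range (M+1), t n with hrdef
  have hterm : ∀ n, ι (cc n * Qbar n) * f
      = ι (cc n * C (c^n) * Q (n+1)) - t n := by
    intro n
    rw [hQbar n, htdef]
    simp only [map_mul]
    have := hKey n
    calc ι (cc n) * (ι (C (c^n)) * ι (Q n)) * f
        = ι (cc n) * ι (C (c^n)) * (ι (Q n) * f) := by ring
      _ = ι (cc n) * ι (C (c^n)) * (ι (Q (n+1)) - g^(n+1)) := by rw [this, hgdef]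
      _ = ι (cc n) * ι (C (c^n)) * ι (Q (n+1)) - ι (cc n) * ι (C (c^n)) * g^(n+1) := by ring
  have hfact : ι lam * f = ι P - r := by
    rw [hPdef, hrdef]
    conv_lhs => rw [hsum]
    rw [map_sum, map_sum, Finset.sum_mul, ← Finset.sum_sub_distrib]
    exact Finset.sum_congr rfl fun n _ => hterm n
  -- valuation of terms
  have hvt : ∀ n, cc n ≠ 0 → v (t n) = q ^ (cc n).natDegree / q ^ ((n+1)*d) := by
    intro n h
    have hnz : cc n * C (c^n) ≠ 0 := mul_ne_zero h (by simpa using pow_ne_zero n hc)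
    rw [htdef]
    show v (ι (cc n * C (c^n)) * g^(n+1)) = _
    rw [v.map_mul, v.map_pow, hvg, hdeg _ hnz, natDegree_mul h (by simpa using pow_ne_zero n hc),
      natDegree_C, add_zero, inv_pow, ← pow_mul, div_eq_mul_inv]
    congr 3
    ring
  have hvt0 : ∀ n, cc n = 0 → t n = 0 := by
    intro n h
    rw [htdef]
    show ι (cc n * C (c^n)) * g^(n+1) = 0
    rw [h, zero_mul, map_zero, zero_mul]
  -- v r < 1
  have hr1 : v r < 1 := by
    rw [hrdef]
    refine ultra_sum_lt' v hna one_pos fun n _ => ?_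
    rcases eq_or_ne (cc n) 0 with h | h
    · rw [hvt0 n h]; simpa using one_pos
    · rw [hvt n h, div_lt_one (by positivity)]
      refine pow_lt_pow_right₀ hq1 ?_
      have h2 := hcnd n h
      nlinarith [h2]
  -- pnorm value and smallness
  have hpn : pnorm ι v (ι lam * f) = v r := by
    rw [hfact]; exact pnorm_eq' ι v hna hdeg P r hr1
  have hre : v r < (q ^ (N*d + l))⁻¹ := by
    have := hlam
    rw [Lambda, Set.mem_setOf_eq, hpn] at this
    exact this
  have hεpos : (0:ℝ) < (q ^ (N*d + l))⁻¹ := by positivity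
  -- each term is small
  have hsmall : ∀ n ∈ Finset.range (M+1), v (t n) < (q ^ (N*d + l))⁻¹ := by
    refine min_extract v hna (Finset.range (M+1)) t _ ?_ (by rw [← hrdef]; exact hre)
    intro n _ k _ hnk htn0
    have hcn : cc n ≠ 0 := by
      intro h; exact htn0 (hvt0 n h)
    rcases eq_or_ne (cc k) 0 with h | h
    · rw [hvt0 k h, v.map_zero]
      rw [hvt n hcn]
      positivity
    · rw [hvt n hcn, hvt k h, div_lt_div_iff₀ (by positivity) (by positivity),
        ← pow_add, ← pow_add]
      refine pow_lt_pow_right₀ hq1 ?_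
      have h1 := hcnd k h
      have h2 : (n+2) ≤ k+1 := by omega
      have h3 : (n+2)*d ≤ (k+1)*d := Nat.mul_le_mul_right d h2
      nlinarith [h1, h3]
  -- the forcing inequalities
  have hforce : ∀ n, n ≤ M → cc n ≠ 0 → (cc n).natDegree + (N*d + l) < (n+1)*d := by
    intro n hn h
    have h1 := hsmall n (Finset.mem_range.mpr (by omega))
    rw [hvt n h, inv_eq_one_div, div_lt_div_iff₀ (by positivity) (by positivity),
      one_mul, ← pow_add] at h1
    exact (pow_lt_pow_iff_right₀ hq1).mp h1
  -- coefficients below N vanish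
  have czero : ∀ n, n < N → cc n = 0 := by
    intro n hn
    by_cases hnM : n ≤ M
    · by_contra h
      have h1 := hforce n hnM h
      have h2 : (n+1)*d ≤ N*d := Nat.mul_le_mul_right d (by omega)
      omega
    · exact hcz n (by omega)
  have hdN : cc N ≠ 0 → (cc N).natDegree + l < d := by
    intro h
    have hNM : N ≤ M := by
      by_contra hh
      exact h (hcz N (by omega))
    have h1 := hforce N hNM h
    have h2 : (N+1)*d = N*d + d := by ring
    omega
  -- the top nonzero index
  set S : Finset ℕ := (Finset.range (M+1)).filter (fun n => cc n ≠ 0) with hSdef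
  have hSne : S.Nonempty := by
    by_contra hh
    rw [Finset.not_nonempty_iff_eq_empty, hSdef, Finset.filter_eq_empty_iff] at hh
    apply hlam0
    rw [hsum]
    refine Finset.sum_eq_zero fun n hn => ?_
    have := hh hn
    push_neg at this
    rw [this, zero_mul]
  set m' : ℕ := S.max' hSne with hm'def
  have hm'S : m' ∈ S := S.max'_mem hSne
  have hm'M : m' ≤ M := by
    have := (Finset.mem_filter.mp hm'S).1
    rw [Finset.mem_range] at this
    omega
  have hccm' : cc m' ≠ 0 := (Finset.mem_filter.mp hm'S).2
  have hNm' : N ≤ m' := by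
    by_contra hh
    exact hccm' (czero m' (by omega))
  have hm'max : ∀ n, m' < n → cc n = 0 := by
    intro n hn
    by_cases hnM : n ≤ M
    · by_contra h
      have : n ∈ S := Finset.mem_filter.mpr ⟨Finset.mem_range.mpr (by omega), h⟩
      have := S.le_max' n this
      omega
    · exact hcz n (by omega)
  set m : ℕ := m' - N with hmdef
  have hNm : N + m = m' := by omega
  set u₀ : Fin (m+1) → Polynomial Fq := fun i => cc (N + (i : ℕ)) with hu₀def
  -- extension of u₀ agrees with cc
  have hext : ∀ n, (if h : N ≤ n ∧ n ≤ N + m then u₀ ⟨n - N, by omega⟩ else 0) = cc n := by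
    intro n
    by_cases h : N ≤ n ∧ n ≤ N + m
    · rw [dif_pos h, hu₀def]
      show cc (N + (n - N)) = cc n
      congr 1
      omega
    · rw [dif_neg h]
      rcases not_and_or.mp h with h1 | h1
      · exact (czero n (by omega)).symm
      · exact (hm'max n (by omega)).symm
  have hsum₀ : lam = ∑ i : Fin (m+1), u₀ i * Qbar (N + (i : ℕ)) := by
    rw [← ext_sum Qbar N m M (by omega) u₀, hsum]
    exact Finset.sum_congr rfl fun n _ => by rw [hext n]
  refine ⟨⟨m, u₀⟩, ⟨?_, ?_, ?_, ?_⟩, ?_⟩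
  · intro i
    exact hcd (N + (i : ℕ))
  · show (cc (N + ((0 : Fin (m+1)) : ℕ))).degree < ((d - l : ℕ) : WithBot ℕ)
    rw [Fin.val_zero, add_zero]
    rcases eq_or_ne (cc N) 0 with h | h
    · rw [h, degree_zero]
      exact WithBot.bot_lt_coe _
    · rw [degree_eq_natDegree h, Nat.cast_lt]
      have := hdN h
      omega
  · show cc (N + ((Fin.last m : Fin (m+1)) : ℕ)) ≠ 0
    rw [Fin.val_last, hNm]
    exact hccm'
  · exact hsum₀
  -- uniqueness
  rintro ⟨m₂, u₂⟩ ⟨hu1, hu2, hu3, hu4⟩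
  set Mbig : ℕ := M + m₂ + N + 1 with hMbigdef
  set e₂ : ℕ → Polynomial Fq :=
    fun n => if h : N ≤ n ∧ n ≤ N + m₂ then u₂ ⟨n - N, by omega⟩ else 0 with he₂def
  have he₂d : ∀ n, (e₂ n).degree < (d : ℕ) := by
    intro n
    simp only [he₂def]
    by_cases h : N ≤ n ∧ n ≤ N + m₂
    · rw [dif_pos h]; exact hu1 _
    · rw [dif_neg h, degree_zero]; exact WithBot.bot_lt_coe _
  have hsum₂ : lam = ∑ n ∈ Finset.range (Mbig+1), e₂ n * Qbar n := by
    rw [ext_sum Qbar N m₂ Mbig (by omega) u₂]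
    exact hu4
  have hsum₁ : lam = ∑ n ∈ Finset.range (Mbig+1), cc n * Qbar n := by
    rw [hsum]
    refine Finset.sum_subset ?_ ?_
    · intro n hn
      rw [Finset.mem_range] at hn ⊢
      omega
    · intro n hn hn2
      rw [Finset.mem_range] at hn hn2
      rw [hcz n (by omega), zero_mul]
  have hzero : ∀ n ≤ Mbig, cc n - e₂ n = 0 := by
    refine expansion_zero d hd Qbar hQm Mbig (fun n => cc n - e₂ n) ?_ ?_
    · intro n
      refine lt_of_le_of_lt (degree_sub_le _ _) (max_lt (hcd n) (he₂d n))
    · have : ∑ n ∈ Finset.range (Mbig+1), (cc n - e₂ n) * Qbar n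
          = ∑ n ∈ Finset.range (Mbig+1), cc n * Qbar n
            - ∑ n ∈ Finset.range (Mbig+1), e₂ n * Qbar n := by
        rw [← Finset.sum_sub_distrib]
        exact Finset.sum_congr rfl fun n _ => by ring
      rw [this, ← hsum₁, ← hsum₂, sub_self]
  have heq : ∀ n ≤ Mbig, cc n = e₂ n := by
    intro n hn
    have := hzero n hn
    linear_combination this
  -- m₂ = m
  have hm₂m : m₂ = m := by
    have h1 : N + m₂ ≤ m' := by
      by_contra hh
      have h2 : cc (N + m₂) = 0 := hm'max _ (by omega)
      have h3 : e₂ (N + m₂) ≠ 0 := by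
        simp only [he₂def]
        have hcond : N ≤ N + m₂ ∧ N + m₂ ≤ N + m₂ := by omega
        rw [dif_pos hcond]
        have : (⟨N + m₂ - N, by omega⟩ : Fin (m₂+1)) = Fin.last m₂ := Fin.ext (by simp)
        rw [this]
        exact hu3
      exact h3 (by rw [← heq (N + m₂) (by omega)]; exact h2)
    have h2 : m' ≤ N + m₂ := by
      by_contra hh
      have h3 : e₂ m' = 0 := by
        simp only [he₂def]
        rw [dif_neg]
        omega
      exact hccm' (by rw [heq m' (by omega)]; exact h3)
    omega
  subst hm₂m
  show (⟨m, u₂⟩ : Σ m : ℕ, Fin (m + 1) → Polynomial Fq) = ⟨m, u₀⟩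
  congr 1
  funext i
  have h1 : cc (N + (i : ℕ)) = e₂ (N + (i : ℕ)) := heq _ (by omega)
  rw [hu₀def]
  show u₂ i = cc (N + (i : ℕ))
  rw [h1]
  simp only [he₂def]
  have hcond : N ≤ N + (i : ℕ) ∧ N + (i : ℕ) ≤ N + m := by
    constructor
    · omega
    · have := i.isLt
      omega
  rw [dif_pos hcond]
  congr 1
  exact Fin.ext (by simp)
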